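/- Every nonzero matrix in Q_A can be carried by the action S ↦ MSM⁻¹ of U(2)^R = {M ∈ SO(4) : MJ = JM}, together with scaling by a positive real number, to the diagonal matrix S_x = diag(1, x, -1, -x) for some x ∈ [-1, 1]. -/

import Mathlib

open Matrix
open scoped RealInnerProductSpace
set_option maxHeartbeats 1000000

/-- The complex structure J on R⁴, in blocks [[0,-I₂],[I₂,0]]. -/
def Jmat : Matrix (Fin 4) (Fin 4) ℝ :=
  !![0, 0, -1, 0;
     0, 0, 0, -1;
     1, 0, 0, 0;
     0, 1, 0, 0]

lemma Jmul (a : Fin 4 → ℝ) : Jmat *ᵥ a = ![-a 2, -a 3, a 0, a 1] := by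
  funext i
  fin_cases i <;>
    simp [Jmat, mulVec, dotProduct, Fin.sum_univ_four, Matrix.vecHead, Matrix.vecTail]

lemma dot_expand (a b : Fin 4 → ℝ) :
    a ⬝ᵥ b = a 0 * b 0 + a 1 * b 1 + a 2 * b 2 + a 3 * b 3 := by
  simp [dotProduct, Fin.sum_univ_four]

lemma Jdot_self (a : Fin 4 → ℝ) : a ⬝ᵥ (Jmat *ᵥ a) = 0 := by
  rw [Jmul, dot_expand]; simp; ring

lemma Jdot_J (a b : Fin 4 → ℝ) : (Jmat *ᵥ a) ⬝ᵥ (Jmat *ᵥ b) = a ⬝ᵥ b := by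
  rw [Jmul, Jmul, dot_expand, dot_expand]; simp; ring

lemma Jdot_left (a b : Fin 4 → ℝ) : (Jmat *ᵥ a) ⬝ᵥ b = -(a ⬝ᵥ (Jmat *ᵥ b)) := by
  rw [Jmul, Jmul, dot_expand, dot_expand]; simp; ring

lemma symm_dot (A : Matrix (Fin 4) (Fin 4) ℝ) (hA : Aᵀ = A) (a b : Fin 4 → ℝ) :
    (A *ᵥ a) ⬝ᵥ b = a ⬝ᵥ (A *ᵥ b) := by
  rw [Matrix.dotProduct_mulVec, ← Matrix.mulVec_transpose, hA]

lemma dot_self_nonneg (a : Fin 4 → ℝ) : 0 ≤ a ⬝ᵥ a :=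
  Finset.sum_nonneg fun i _ => mul_self_nonneg _

lemma dot_self_pos {a : Fin 4 → ℝ} (ha : a ≠ 0) : 0 < a ⬝ᵥ a := by
  rcases Function.ne_iff.mp ha with ⟨i, hi⟩
  have h1 : 0 < a i * a i := mul_self_pos.mpr hi
  have h2 : a i * a i ≤ ∑ j, a j * a j :=
    Finset.single_le_sum (fun j _ => mul_self_nonneg (a j)) (Finset.mem_univ i)
  calc (0:ℝ) < a i * a i := h1
    _ ≤ a ⬝ᵥ a := h2

lemma det4 (M : Matrix (Fin 4) (Fin 4) ℝ) : M.det =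
    M 0 0 * (M 1 1 * (M 2 2 * M 3 3 - M 2 3 * M 3 2) - M 1 2 * (M 2 1 * M 3 3 - M 2 3 * M 3 1) + M 1 3 * (M 2 1 * M 3 2 - M 2 2 * M 3 1)) -
    M 0 1 * (M 1 0 * (M 2 2 * M 3 3 - M 2 3 * M 3 2) - M 1 2 * (M 2 0 * M 3 3 - M 2 3 * M 3 0) + M 1 3 * (M 2 0 * M 3 2 - M 2 2 * M 3 0)) +
    M 0 2 * (M 1 0 * (M 2 1 * M 3 3 - M 2 3 * M 3 1) - M 1 1 * (M 2 0 * M 3 3 - M 2 3 * M 3 0) + M 1 3 * (M 2 0 * M 3 1 - M 2 1 * M 3 0)) -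
    M 0 3 * (M 1 0 * (M 2 1 * M 3 2 - M 2 2 * M 3 1) - M 1 1 * (M 2 0 * M 3 2 - M 2 2 * M 3 0) + M 1 2 * (M 2 0 * M 3 1 - M 2 1 * M 3 0)) := by
  rw [Matrix.det_succ_row_zero]
  simp [Fin.sum_univ_succ, Matrix.det_fin_three, Matrix.submatrix_apply, Fin.succAbove]
  ring

lemma det_nonneg_of_commJ (M : Matrix (Fin 4) (Fin 4) ℝ) (h : M * Jmat = Jmat * M) :
    0 ≤ M.det := by
  have hE : ∀ i j, (M * Jmat) i j = (Jmat * M) i j := fun i j => by rw [h]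
  have e1 : M 0 2 = -M 2 0 := by have := hE 0 0; simpa [Jmat, mul_apply, Fin.sum_univ_four] using this
  have e2 : M 1 2 = -M 3 0 := by have := hE 1 0; simpa [Jmat, mul_apply, Fin.sum_univ_four] using this
  have e3 : M 2 2 = M 0 0 := by have := hE 2 0; simpa [Jmat, mul_apply, Fin.sum_univ_four] using this
  have e4 : M 3 2 = M 1 0 := by have := hE 3 0; simpa [Jmat, mul_apply, Fin.sum_univ_four] using this
  have e5 : M 0 3 = -M 2 1 := by have := hE 0 1; simpa [Jmat, mul_apply, Fin.sum_univ_four] using this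
  have e6 : M 1 3 = -M 3 1 := by have := hE 1 1; simpa [Jmat, mul_apply, Fin.sum_univ_four] using this
  have e7 : M 2 3 = M 0 1 := by have := hE 2 1; simpa [Jmat, mul_apply, Fin.sum_univ_four] using this
  have e8 : M 3 3 = M 1 1 := by have := hE 3 1; simpa [Jmat, mul_apply, Fin.sum_univ_four] using this
  have hdet : M.det =
      (M 0 0 * M 1 1 - M 0 1 * M 1 0 - M 2 0 * M 3 1 + M 2 1 * M 3 0)^2
      + (M 0 0 * M 3 1 + M 1 1 * M 2 0 - M 0 1 * M 3 0 - M 1 0 * M 2 1)^2 := by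
    rw [det4, e1, e2, e3, e4, e5, e6, e7, e8]; ring
  rw [hdet]; positivity

lemma vmv_transpose (a b : Fin 4 → ℝ) :
    (Matrix.vecMulVec a b)ᵀ = Matrix.vecMulVec b a := by
  ext i j; simp [Matrix.vecMulVec_apply, mul_comm]

lemma herm_of_symm (A : Matrix (Fin 4) (Fin 4) ℝ) (h : Aᵀ = A) : A.IsHermitian := by
  rw [Matrix.IsHermitian, Matrix.conjTranspose_eq_transpose_of_trivial, h]

lemma vmv_mulVec (a b w : Fin 4 → ℝ) : (Matrix.vecMulVec a b) *ᵥ w = (b ⬝ᵥ w) • a := by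
  funext i
  simp [Matrix.vecMulVec_apply, mulVec, dotProduct, Finset.sum_mul, Finset.mul_sum,
    mul_comm, mul_assoc, mul_left_comm]

lemma top_eigen (A : Matrix (Fin 4) (Fin 4) ℝ) (hA : A.IsHermitian) :
    ∃ (lam : ℝ) (v : Fin 4 → ℝ), v ⬝ᵥ v = 1 ∧ A.mulVec v = lam • v ∧
      ∀ w : Fin 4 → ℝ, w ⬝ᵥ A.mulVec w ≤ lam * (w ⬝ᵥ w) := by
  classical
  set E := EuclideanSpace ℝ (Fin 4)
  let Tl : E →ₗ[ℝ] E := Matrix.toEuclideanLin A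
  have hsymm : Tl.IsSymmetric := (Matrix.isHermitian_iff_isSymmetric).mp hA
  let T : E →L[ℝ] E := LinearMap.toContinuousLinearMap Tl
  have hTsa : IsSelfAdjoint T := LinearMap.IsSymmetric.isSelfAdjoint (A := T) hsymm
  have hcpt : IsCompact (Metric.sphere (0 : E) 1) := isCompact_sphere 0 1
  have hne : (Metric.sphere (0 : E) 1).Nonempty := by
    refine ⟨EuclideanSpace.single 0 1, ?_⟩
    rw [mem_sphere_iff_norm, sub_zero, EuclideanSpace.norm_single]
    norm_num
  obtain ⟨x₀, hx₀mem, hx₀max⟩ :=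
    hcpt.exists_isMaxOn hne (T.reApplyInnerSelf_continuous.continuousOn)
  have hx₀norm : ‖x₀‖ = 1 := by simpa using hx₀mem
  have hx₀ne : x₀ ≠ 0 := by
    intro h; rw [h] at hx₀norm; simp at hx₀norm
  have heig := hTsa.hasEigenvector_of_isLocalExtrOn hx₀ne (Or.inr (by
    rw [hx₀norm]; exact hx₀max.localize))
  set lam : ℝ := T.rayleighQuotient x₀ with hlam
  refine ⟨lam, x₀, ?_, ?_, ?_⟩
  · have := real_inner_self_eq_norm_sq x₀
    rw [hx₀norm] at this
    rw [EuclideanSpace.inner_eq_star_dotProduct, star_trivial] at this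
    simpa [PiLp.inner_apply, dotProduct] using this
  · have h1 : Tl x₀ = lam • x₀ := heig.apply_eq_smul
    exact congrArg WithLp.ofLp h1
  · intro w0
    let w : E := WithLp.toLp 2 w0
    show w ⬝ᵥ A.mulVec w ≤ lam * (w ⬝ᵥ w)
    rcases eq_or_ne w0 0 with rfl | hw0
    · show (0: Fin 4 → ℝ) ⬝ᵥ A.mulVec 0 ≤ lam * ((0: Fin 4 → ℝ) ⬝ᵥ (0: Fin 4 → ℝ))
      simp
    · have hw : w ≠ 0 := fun h => hw0 (congrArg WithLp.ofLp h)
      have hwn : ‖w‖ ≠ 0 := norm_ne_zero_iff.mpr hw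
      set y : E := ‖w‖⁻¹ • w with hy
      have hyn : ‖y‖ = 1 := norm_smul_inv_norm hw
      have hymem : y ∈ Metric.sphere (0 : E) 1 := by simpa using hyn
      have hmax := hx₀max hymem
      simp only [Set.mem_setOf_eq] at hmax
      have hlam_eq : T.reApplyInnerSelf x₀ = lam := by
        rw [hlam, ContinuousLinearMap.rayleighQuotient, hx₀norm]; simp
      have hsc : T.reApplyInnerSelf y = ‖w‖⁻¹^2 * T.reApplyInnerSelf w := by
        have := T.reApplyInnerSelf_smul (x := w) (c := (‖w‖⁻¹ : ℝ))
        simpa [Real.norm_eq_abs, abs_of_nonneg, inv_nonneg.mpr (norm_nonneg _)] using this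
      have hre : T.reApplyInnerSelf w = w ⬝ᵥ A.mulVec w := by
        rw [ContinuousLinearMap.reApplyInnerSelf_apply]
        show (inner ℝ (Tl w) w : ℝ) = _
        rw [real_inner_comm]
        rw [EuclideanSpace.inner_eq_star_dotProduct, star_trivial, dotProduct_comm]
        rfl
      have hnw : ‖w‖^2 = w ⬝ᵥ w := by
        have := real_inner_self_eq_norm_sq w
        rw [EuclideanSpace.inner_eq_star_dotProduct, star_trivial] at this
        simpa [PiLp.inner_apply, dotProduct] using this.symm
      rw [hsc, hre, hlam_eq] at hmax
      have h0 : (0:ℝ) < ‖w‖^2 := by positivity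
      have h1 : ‖w‖⁻¹^2 * ‖w‖^2 = 1 := by field_simp
      have h2 : w ⬝ᵥ A.mulVec w ≤ ‖w‖^2 * lam := by
        calc w ⬝ᵥ A.mulVec w = ‖w‖^2 * (‖w‖⁻¹^2 * (w ⬝ᵥ A.mulVec w)) := by
              rw [← mul_assoc, mul_comm (‖w‖^2), h1, one_mul]
          _ ≤ ‖w‖^2 * lam := mul_le_mul_of_nonneg_left hmax h0.le
      rw [hnw] at h2
      linarith [h2, mul_comm lam (w ⬝ᵥ w)]

/-- Every nonzero matrix in Q_A can be carried, by conjugation by an element of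
U(2)^R = {M ∈ SO(4) : MJ = JM} together with a positive scaling, to
S_x = diag(1, x, -1, -x) for some x ∈ [-1,1]. -/
theorem stmt_13 (S : Matrix (Fin 4) (Fin 4) ℝ) (hS : Sᵀ = S)
    (hSJ : S * Jmat = -(Jmat * S)) (hne : S ≠ 0) :
    ∃ (M : Matrix (Fin 4) (Fin 4) ℝ) (c x : ℝ),
      Mᵀ * M = 1 ∧ M.det = 1 ∧ M * Jmat = Jmat * M ∧
      0 < c ∧ -1 ≤ x ∧ x ≤ 1 ∧
      c • (M * S * M⁻¹) = Matrix.diagonal ![1, x, -1, -x] := by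
  classical
  have hSH : S.IsHermitian := herm_of_symm S hS
  have hSJv : ∀ v, S *ᵥ (Jmat *ᵥ v) = -(Jmat *ᵥ (S *ᵥ v)) := by
    intro v
    have h1 : (S * Jmat) *ᵥ v = (-(Jmat * S)) *ᵥ v := by rw [hSJ]
    rw [← Matrix.mulVec_mulVec v S Jmat, Matrix.neg_mulVec,
      ← Matrix.mulVec_mulVec v Jmat S] at h1
    exact h1
  obtain ⟨lam1, v1, hv1n, hv1e, hb1⟩ := top_eigen S hSH
  have hb1' : ∀ w, -(lam1 * (w ⬝ᵥ w)) ≤ w ⬝ᵥ (S *ᵥ w) := by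
    intro w
    have h1 := hb1 (Jmat *ᵥ w)
    rw [hSJv w, dotProduct_neg, Jdot_J, Jdot_J] at h1
    linarith
  have hlam1 : 0 < lam1 := by
    by_contra hneg
    push_neg at hneg
    have hq : ∀ w, w ⬝ᵥ (S *ᵥ w) = 0 := by
      intro w
      have h1 := hb1 w
      have h2 := hb1' w
      have h3 : 0 ≤ w ⬝ᵥ w := dot_self_nonneg w
      nlinarith
    have hbil : ∀ a b, a ⬝ᵥ (S *ᵥ b) = 0 := by
      intro a b
      have h1 := hq (a + b)
      have h2 := hq a
      have h3 := hq b
      have hsym : b ⬝ᵥ (S *ᵥ a) = a ⬝ᵥ (S *ᵥ b) := by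
        rw [← symm_dot S hS a b, dotProduct_comm]
      have hexp : (a+b) ⬝ᵥ (S *ᵥ (a+b)) =
          a ⬝ᵥ (S *ᵥ a) + a ⬝ᵥ (S *ᵥ b) + b ⬝ᵥ (S *ᵥ a) + b ⬝ᵥ (S *ᵥ b) := by
        rw [Matrix.mulVec_add]
        simp [dotProduct_add, add_dotProduct]
        ring
      rw [hexp, h2, h3, hsym] at h1
      linarith
    apply hne
    ext i j
    have := hbil (Pi.single i 1) (Pi.single j 1)
    simpa [dotProduct, mulVec, Pi.single_apply, Finset.sum_ite_eq', mul_ite,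
      Finset.mul_sum] using this
  -- v3
  set v3 : Fin 4 → ℝ := Jmat *ᵥ v1 with hv3def
  have hv3n : v3 ⬝ᵥ v3 = 1 := by rw [hv3def, Jdot_J, hv1n]
  have hv3e : S *ᵥ v3 = (-lam1) • v3 := by
    rw [hv3def, hSJv, hv1e, Matrix.mulVec_smul]
    funext i; simp
  have d13 : v1 ⬝ᵥ v3 = 0 := Jdot_self v1
  have d31 : v3 ⬝ᵥ v1 = 0 := by rw [dotProduct_comm]; exact d13
  -- T
  set T : Matrix (Fin 4) (Fin 4) ℝ :=
    S - (4*lam1) • (Matrix.vecMulVec v1 v1 + Matrix.vecMulVec v3 v3) with hTdef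
  have hTT : Tᵀ = T := by
    rw [hTdef, Matrix.transpose_sub, Matrix.transpose_smul, Matrix.transpose_add,
      vmv_transpose, vmv_transpose, hS]
  have hTmul : ∀ w, T *ᵥ w =
      S *ᵥ w - (4*lam1) • ((v1 ⬝ᵥ w) • v1 + (v3 ⬝ᵥ w) • v3) := by
    intro w
    rw [hTdef, Matrix.sub_mulVec, Matrix.smul_mulVec, Matrix.add_mulVec,
      vmv_mulVec, vmv_mulVec]
  obtain ⟨lam2, u, hun, hue, hb2⟩ := top_eigen T (herm_of_symm T hTT)
  -- nonzero vector orthogonal to v1 and v3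
  obtain ⟨w, hw0, hwv1, hwv3⟩ :
      ∃ w : Fin 4 → ℝ, w ≠ 0 ∧ v1 ⬝ᵥ w = 0 ∧ v3 ⬝ᵥ w = 0 := by
    let f : (Fin 4 → ℝ) →ₗ[ℝ] (Fin 2 → ℝ) :=
      { toFun := fun w => ![v1 ⬝ᵥ w, v3 ⬝ᵥ w]
        map_add' := by
          intro a b; funext i; fin_cases i <;> simp [dotProduct_add]
        map_smul' := by
          intro c a; funext i; fin_cases i <;> simp [dotProduct_smul] }
    have hni : ¬ Function.Injective f := by
      intro hinj
      have := LinearMap.finrank_le_finrank_of_injective hinj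
      rw [Module.finrank_fin_fun, Module.finrank_fin_fun] at this
      omega
    rw [Function.not_injective_iff] at hni
    obtain ⟨a, b, hab, hne'⟩ := hni
    have h0 : f (a - b) = 0 := by rw [map_sub, hab, sub_self]
    refine ⟨a - b, sub_ne_zero.mpr hne', ?_, ?_⟩
    · have := congrFun h0 0
      simpa [f] using this
    · have := congrFun h0 1
      simpa [f] using this
  have hwpos : 0 < w ⬝ᵥ w := dot_self_pos hw0
  have hTw : w ⬝ᵥ (T *ᵥ w) = w ⬝ᵥ (S *ᵥ w) := by
    rw [hTmul, hwv1, hwv3]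
    simp
  have hlow : -lam1 ≤ lam2 := by
    have h1 := hb2 w
    have h2 := hb1' w
    rw [hTw] at h1
    nlinarith
  -- orthogonality of u
  have hTv1 : T *ᵥ v1 = (-(3*lam1)) • v1 := by
    rw [hTmul, hv1e, hv1n, d31]
    funext i; simp; ring
  have hTv3 : T *ᵥ v3 = (-(5*lam1)) • v3 := by
    rw [hTmul, hv3e, hv3n, d13]
    funext i; simp; ring
  have huv1 : u ⬝ᵥ v1 = 0 := by
    have h1 : (T *ᵥ u) ⬝ᵥ v1 = lam2 * (u ⬝ᵥ v1) := by
      rw [hue]; simp [smul_dotProduct]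
    have h2 : (T *ᵥ u) ⬝ᵥ v1 = u ⬝ᵥ (T *ᵥ v1) := symm_dot T hTT u v1
    rw [hTv1, dotProduct_smul] at h2
    have heq : lam2 * (u ⬝ᵥ v1) = -(3*lam1) * (u ⬝ᵥ v1) := by
      rw [← h1, h2, smul_eq_mul]; try ring
    have hfac : (lam2 + 3*lam1) * (u ⬝ᵥ v1) = 0 := by
      rw [add_mul]; linarith [heq]
    rcases mul_eq_zero.mp hfac with h | h
    · exfalso; nlinarith
    · exact h
  have huv3 : u ⬝ᵥ v3 = 0 := by
    have h1 : (T *ᵥ u) ⬝ᵥ v3 = lam2 * (u ⬝ᵥ v3) := by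
      rw [hue]; simp [smul_dotProduct]
    have h2 : (T *ᵥ u) ⬝ᵥ v3 = u ⬝ᵥ (T *ᵥ v3) := symm_dot T hTT u v3
    rw [hTv3, dotProduct_smul] at h2
    have heq : lam2 * (u ⬝ᵥ v3) = -(5*lam1) * (u ⬝ᵥ v3) := by
      rw [← h1, h2, smul_eq_mul]; try ring
    have hfac : (lam2 + 5*lam1) * (u ⬝ᵥ v3) = 0 := by
      rw [add_mul]; linarith [heq]
    rcases mul_eq_zero.mp hfac with h | h
    · exfalso; nlinarith
    · exact h
  have hue' : S *ᵥ u = lam2 • u := by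
    have h1 := hTmul u
    rw [hue] at h1
    have hv1u : v1 ⬝ᵥ u = 0 := by rw [dotProduct_comm]; exact huv1
    have hv3u : v3 ⬝ᵥ u = 0 := by rw [dotProduct_comm]; exact huv3
    rw [hv1u, hv3u] at h1
    simp at h1
    linear_combination (norm := (funext i; simp; ring_nf)) h1.symm
  have hup : lam2 ≤ lam1 := by
    have h1 := hb1 u
    have h2 : u ⬝ᵥ (S *ᵥ u) = lam2 := by
      rw [hue', dotProduct_smul, hun]; simp
    rw [h2, hun] at h1
    linarith
  -- v4
  set v4 : Fin 4 → ℝ := Jmat *ᵥ u with hv4def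
  have hv4n : v4 ⬝ᵥ v4 = 1 := by rw [hv4def, Jdot_J, hun]
  have hv4e : S *ᵥ v4 = (-lam2) • v4 := by
    rw [hv4def, hSJv, hue', Matrix.mulVec_smul]
    funext i; simp
  have d12 : v1 ⬝ᵥ u = 0 := by rw [dotProduct_comm]; exact huv1
  have d21 : u ⬝ᵥ v1 = 0 := huv1
  have d23 : u ⬝ᵥ v3 = 0 := huv3
  have d32 : v3 ⬝ᵥ u = 0 := by rw [dotProduct_comm]; exact huv3
  have d14 : v1 ⬝ᵥ v4 = 0 := by
    rw [hv4def]
    have := Jdot_left u v1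
    rw [← hv3def] at this
    have h2 : (Jmat *ᵥ u) ⬝ᵥ v1 = -(u ⬝ᵥ v3) := this
    rw [dotProduct_comm, h2, huv3, neg_zero]
  have d41 : v4 ⬝ᵥ v1 = 0 := by rw [dotProduct_comm]; exact d14
  have d24 : u ⬝ᵥ v4 = 0 := by rw [hv4def]; exact Jdot_self u
  have d42 : v4 ⬝ᵥ u = 0 := by rw [dotProduct_comm]; exact d24
  have d34 : v3 ⬝ᵥ v4 = 0 := by rw [hv3def, hv4def, Jdot_J]; exact d12
  have d43 : v4 ⬝ᵥ v3 = 0 := by rw [dotProduct_comm]; exact d34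
  -- the orthogonal matrix
  set cols : Fin 4 → (Fin 4 → ℝ) := ![v1, u, v3, v4] with hcols
  set N : Matrix (Fin 4) (Fin 4) ℝ := Matrix.of (fun i j => cols j i) with hNdef
  have hNtN : Nᵀ * N = 1 := by
    have key : ∀ i j, (Nᵀ * N) i j = cols i ⬝ᵥ cols j := fun i j => rfl
    ext i j
    rw [key]
    fin_cases i <;> fin_cases j <;>
      simp [hcols, Matrix.one_apply, hv1n, hun, hv3n, hv4n, d12, d21, d13, d31, d14, d41,
        d23, d32, d24, d42, d34, d43]
  have hNJ : N * Jmat = Jmat * N := by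
    have hv3c : v3 = ![-v1 2, -v1 3, v1 0, v1 1] := by rw [hv3def, Jmul]
    have hv4c : v4 = ![-u 2, -u 3, u 0, u 1] := by rw [hv4def, Jmul]
    ext i j
    fin_cases i <;> fin_cases j <;>
      simp [hNdef, hcols, Jmat, mul_apply, Fin.sum_univ_four, hv3c, hv4c,
        Matrix.vecHead, Matrix.vecTail] <;> ring
  set D : Matrix (Fin 4) (Fin 4) ℝ := Matrix.diagonal ![lam1, lam2, -lam1, -lam2] with hDdef
  have hSN : S * N = N * D := by
    have hmulcol : ∀ i j, (S * N) i j = (S *ᵥ (cols j)) i := fun i j => rfl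
    ext i j
    rw [hmulcol, hDdef, Matrix.mul_diagonal]
    fin_cases j
    · show (S *ᵥ cols 0) i = N i 0 * ![lam1, lam2, -lam1, -lam2] 0
      rw [show cols 0 = v1 from rfl, hv1e]; simp [hNdef, hcols]; ring
    · show (S *ᵥ cols 1) i = N i 1 * ![lam1, lam2, -lam1, -lam2] 1
      rw [show cols 1 = u from rfl, hue']; simp [hNdef, hcols]; ring
    · show (S *ᵥ cols 2) i = N i 2 * ![lam1, lam2, -lam1, -lam2] 2
      rw [show cols 2 = v3 from rfl, hv3e]; simp [hNdef, hcols]; ring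
    · show (S *ᵥ cols 3) i = N i 3 * ![lam1, lam2, -lam1, -lam2] 3
      rw [show cols 3 = v4 from rfl, hv4e]; simp [hNdef, hcols]; ring
  have hdetN : N.det = 1 := by
    have h2 : N.det * N.det = 1 := by
      have := congrArg Matrix.det hNtN
      rwa [Matrix.det_mul, Matrix.det_transpose, Matrix.det_one] at this
    have h0 := det_nonneg_of_commJ N hNJ
    nlinarith
  refine ⟨Nᵀ, lam1⁻¹, lam2/lam1, ?_, ?_, ?_, ?_, ?_, ?_, ?_⟩
  · rw [Matrix.transpose_transpose]
    exact mul_eq_one_comm.mp hNtN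
  · rw [Matrix.det_transpose]; exact hdetN
  · have h := congrArg Matrix.transpose hNJ
    rw [Matrix.transpose_mul, Matrix.transpose_mul] at h
    have hJT : Jmatᵀ = -Jmat := by
      ext i j; fin_cases i <;> fin_cases j <;> simp [Jmat, Matrix.vecHead, Matrix.vecTail]
    rw [hJT, Matrix.neg_mul, Matrix.mul_neg] at h
    have := neg_injective h
    rw [this]
  · exact inv_pos.mpr hlam1
  · rw [neg_le, ← neg_div, div_le_one hlam1]; linarith
  · rw [div_le_one hlam1]; exact hup
  · have hinv : (Nᵀ)⁻¹ = N := Matrix.inv_eq_right_inv hNtN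
    rw [hinv]
    have hNSN : Nᵀ * S * N = D := by
      rw [Matrix.mul_assoc, hSN, ← Matrix.mul_assoc, hNtN, Matrix.one_mul]
    rw [hNSN, hDdef]
    ext i j
    rcases eq_or_ne i j with rfl | hij
    · fin_cases i <;>
        simp [Matrix.diagonal_apply_eq, Matrix.smul_apply] <;>
        field_simp
    · simp [Matrix.diagonal_apply_ne _ hij, Matrix.smul_apply]
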